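/- Let n be a positive integer and let c(a,b) = Σ_{d | gcd(a,b)} d·μ(b/d) denote Ramanujan's sum, where μ is the number-theoretic Möbius function. Then the determinant of the n×n matrix (c(a,b))_{1 ≤ a,b ≤ n} equals n!. -/
import Mathlib

open ArithmeticFunction in
/-- **Apostol's theorem.** The determinant of the `n × n` matrix of Ramanujan sums
`c(a,b) = ∑_{d ∣ gcd(a,b)} d·μ(b/d)` equals `n!`. -/
theorem det_ramanujan_sum (n : ℕ) :
    Matrix.det (Matrix.of fun a b : Finset.Icc 1 n =>
        ∑ d ∈ (Nat.gcd a b).divisors, (d : ℤ) * moebius ((b : ℕ) / d)) =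
      (Nat.factorial n : ℤ) := by
  classical
  set ι := (Finset.Icc 1 n : Finset ℕ) with hι
  have hmem : ∀ x : ι, 1 ≤ (x : ℕ) ∧ (x : ℕ) ≤ n := fun x =>
    Finset.mem_Icc.mp x.2
  set G : Matrix ι ι ℤ := Matrix.of fun a d => if (d : ℕ) ∣ (a : ℕ) then 1 else 0 with hG
  set F : Matrix ι ι ℤ := Matrix.of fun d b =>
    if (d : ℕ) ∣ (b : ℕ) then (d : ℤ) * moebius ((b : ℕ) / (d : ℕ)) else 0 with hF
  have key : (Matrix.of fun a b : ι =>
      ∑ d ∈ (Nat.gcd a b).divisors, (d : ℤ) * moebius ((b : ℕ) / d)) = G * F := by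
    ext a b
    have ha1 := (hmem a).1
    have hgcd : Nat.gcd (a : ℕ) (b : ℕ) ≠ 0 :=
      Nat.gcd_ne_zero_left (by omega)
    simp only [Matrix.mul_apply, hG, hF, Matrix.of_apply, ite_mul, one_mul, zero_mul,
      ← ite_and]
    rw [Finset.sum_coe_sort ι (fun d => if d ∣ (a : ℕ) ∧ d ∣ (b : ℕ)
      then (d : ℤ) * moebius ((b : ℕ) / d) else 0)]
    have hsub : (Nat.gcd (a : ℕ) (b : ℕ)).divisors ⊆ ι := by
      intro d hd
      rw [Nat.mem_divisors] at hd
      have h1 : 1 ≤ d := Nat.pos_of_dvd_of_pos hd.1 (Nat.pos_of_ne_zero hd.2)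
      have h2 : d ≤ n := le_trans (Nat.le_of_dvd (by omega)
        (hd.1.trans (Nat.gcd_dvd_left _ _))) (hmem a).2
      rw [hι, Finset.mem_Icc]; exact ⟨h1, h2⟩
    rw [← Finset.sum_subset hsub (fun d _ hd => by
      rw [Nat.mem_divisors, Nat.dvd_gcd_iff] at hd
      exact if_neg (fun h => hd ⟨h, hgcd⟩))]
    refine Finset.sum_congr rfl (fun d hd => ?_)
    rw [Nat.mem_divisors, Nat.dvd_gcd_iff] at hd
    rw [if_pos hd.1]
  rw [key, Matrix.det_mul]
  have hdetG : G.det = 1 := by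
    rw [Matrix.det_of_lowerTriangular G (fun i j hij => by
      rw [hG, Matrix.of_apply, if_neg]
      intro hdvd
      exact absurd (Nat.le_of_dvd (by have := (hmem i).1; omega) hdvd)
        (not_le.mpr (Subtype.coe_lt_coe.mpr hij)))]
    simp [hG, Matrix.of_apply]
  have hdetF : F.det = (Nat.factorial n : ℤ) := by
    rw [Matrix.det_of_upperTriangular (M := F) (fun i j hij => by
      rw [hF, Matrix.of_apply, if_neg]
      intro hdvd
      exact absurd (Nat.le_of_dvd (by have := (hmem j).1; omega) hdvd)
        (not_le.mpr (Subtype.coe_lt_coe.mpr hij)))]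
    have : ∀ i : ι, F i i = ((i : ℕ) : ℤ) := by
      intro i
      rw [hF, Matrix.of_apply, if_pos dvd_rfl, Nat.div_self (by have := (hmem i).1; omega)]
      simp
    rw [Finset.prod_congr rfl (fun i _ => this i)]
    rw [Finset.prod_coe_sort ι (fun x => (x : ℤ))]
    rw [show (∏ i ∈ ι, (i : ℤ)) = ((∏ i ∈ ι, i : ℕ) : ℤ) by push_cast; rfl]
    rw [hι]
    norm_cast
    rw [← Finset.Ico_add_one_right_eq_Icc]
    exact Finset.prod_Ico_id_eq_factorial n
  rw [hdetG, hdetF, one_mul]
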